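/- The convex hull in ℂ×ℝ ≅ ℝ³ of the four points (1−(√2/2)i, √2), (1−(√2/2)i, 1), (1−(1/2)i, √2) and (√2/2−(1/2)i, √2) is contained in the open Cygan ball B((1,0), 1) = {(ζ,t) ∈ ℂ×ℝ : | |ζ−1|² + i t + 2i·Im ζ | < 1}. -/

import Mathlib

noncomputable section

open Complex

/-- The open Cygan ball of squared radius `s` centred at `(ζ₀, t₀)` in the Heisenberg
group `ℂ × ℝ`:  `{(ζ,t) : | |ζ−ζ₀|² + i(t−t₀) + 2i·Im(ζ·conj ζ₀) | < s}`. -/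
def cyganBall (ζ₀ : ℂ) (t₀ : ℝ) (s : ℝ) : Set (ℂ × ℝ) :=
  {p | ‖(((‖p.1 - ζ₀‖ ^ 2 : ℝ) : ℂ)
        + Complex.I * ((p.2 - t₀ : ℝ) : ℂ)
        + 2 * Complex.I * (((p.1 * (starRingEnd ℂ) ζ₀).im : ℝ) : ℂ))‖ < s}

/-- The auxiliary convex function whose `< 1` sublevel set sits inside `B((1,0),1)`. -/
def cyganFun (p : ℂ × ℝ) : ℝ :=
  ‖p.1 - 1‖ ^ 4 + (p.2 + 2 * p.1.im) ^ 2

set_option maxHeartbeats 1000000 in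
lemma convexOn_cyganFun : ConvexOn ℝ Set.univ cyganFun := by
  have h1 : ConvexOn ℝ Set.univ fun p : ℂ × ℝ => ‖p.1 - 1‖ ^ 4 := by
    have hn : ConvexOn ℝ Set.univ fun p : ℂ × ℝ => ‖p.1 - 1‖ := by
      have h := (convexOn_univ_dist (1 : ℂ)).comp_affineMap (LinearMap.fst ℝ ℂ ℝ).toAffineMap
      have : (fun p : ℂ × ℝ => dist p.1 1) = fun p : ℂ × ℝ => ‖p.1 - 1‖ := by
        funext p; exact dist_eq_norm _ _
      simpa [Function.comp_def, dist_eq_norm] using h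
    have himg : (fun p : ℂ × ℝ => ‖p.1 - 1‖) '' Set.univ = Set.Ici 0 := by
      ext r
      simp only [Set.image_univ, Set.mem_range, Set.mem_Ici]
      constructor
      · rintro ⟨p, rfl⟩; exact norm_nonneg _
      · intro hr
        refine ⟨(((1 + r : ℝ) : ℂ), 0), ?_⟩
        have h1r : ((1 + r : ℝ) : ℂ) - 1 = (r : ℂ) := by push_cast; ring
        simp [h1r, Complex.norm_real, Real.norm_eq_abs, _root_.abs_of_nonneg hr]
    have hcomp : ConvexOn ℝ Set.univ ((fun x : ℝ => x ^ 4) ∘ fun p : ℂ × ℝ => ‖p.1 - 1‖) := by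
      refine ConvexOn.comp ?_ hn ?_
      · rw [himg]; exact convexOn_pow 4
      · rw [himg]; intro x hx y hy hxy; exact pow_le_pow_left₀ hx hxy 4
    simpa [Function.comp_def] using hcomp
  have h2 : ConvexOn ℝ Set.univ fun p : ℂ × ℝ => (p.2 + 2 * p.1.im) ^ 2 := by
    have hpow : ConvexOn ℝ Set.univ fun x : ℝ => x ^ 2 := Even.convexOn_pow even_two
    have h2' := hpow.comp_affineMap
      ((LinearMap.snd ℝ ℂ ℝ + 2 • Complex.imLm.comp (LinearMap.fst ℝ ℂ ℝ)).toAffineMap)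
    have hfun : ((fun x : ℝ => x ^ 2) ∘
        ⇑(LinearMap.snd ℝ ℂ ℝ + 2 • Complex.imLm.comp (LinearMap.fst ℝ ℂ ℝ)))
        = fun p : ℂ × ℝ => (p.2 + 2 * p.1.im) ^ 2 := by
      funext p
      simp [Function.comp, smul_eq_mul]
    simpa [hfun] using h2' 
  exact h1.add h2

lemma sublevel_subset : {p : ℂ × ℝ | cyganFun p < 1} ⊆ cyganBall 1 0 1 := by
  intro p hp
  simp only [Set.mem_setOf_eq, cyganFun] at hp
  simp only [cyganBall, Set.mem_setOf_eq]
  set r : ℝ := ‖p.1 - 1‖ ^ 2 with hr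
  set z : ℂ := ((r : ℝ) : ℂ)
        + Complex.I * ((p.2 - 0 : ℝ) : ℂ)
        + 2 * Complex.I * (((p.1 * (starRingEnd ℂ) 1).im : ℝ) : ℂ) with hz
  have hre : z.re = r := by simp [hz]
  have him : z.im = p.2 + 2 * p.1.im := by simp [hz]
  have hsq : ‖z‖ ^ 2 = r ^ 2 + (p.2 + 2 * p.1.im) ^ 2 := by
    rw [Complex.sq_norm, Complex.normSq_apply, hre, him]; ring
  have habs : r = ‖p.1 - 1‖ ^ 2 := rfl
  nlinarith [norm_nonneg z, hp, sq_nonneg (‖p.1 - 1‖ ^ 2)]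

/-- The tetrahedron `𝕋(v₁⁺)` with apex the vertex `v₁⁺ = (1−(√2/2)i, √2)` of the prism
`Σ₂` and the three points `(1−(√2/2)i, 1)`, `(1−(1/2)i, √2)`, `(√2/2−(1/2)i, √2)` on the
edges emanating from `v₁⁺` is contained in the open Cygan ball `B((1,0),1)`, the interior
of the spinal sphere `S₁`. -/
theorem tetrahedron_subset_cyganBall :
    convexHull ℝ
      ({(1 - (√2/2 : ℝ) * Complex.I, (√2 : ℝ)),
        (1 - (√2/2 : ℝ) * Complex.I, (1 : ℝ)),
        (1 - (1/2 : ℝ) * Complex.I, (√2 : ℝ)),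
        ((√2/2 : ℝ) - (1/2 : ℝ) * Complex.I, (√2 : ℝ))} : Set (ℂ × ℝ)) ⊆
      cyganBall 1 0 1 := by
  have hconv : Convex ℝ {p : ℂ × ℝ | cyganFun p < 1} := by
    have := convexOn_cyganFun.convex_lt 1
    simpa using this
  have hs2 : (√2 : ℝ) ^ 2 = 2 := Real.sq_sqrt (by norm_num)
  have hs2' : (1 : ℝ) ≤ √2 := by nlinarith [Real.sqrt_nonneg 2]
  have hs2'' : (√2 : ℝ) ≤ 3/2 := by nlinarith [Real.sqrt_nonneg 2]
  have hs0 : (0 : ℝ) ≤ √2 := Real.sqrt_nonneg 2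
  refine (convexHull_min ?_ hconv).trans sublevel_subset
  intro q hq
  simp only [Set.mem_insert_iff, Set.mem_singleton_iff] at hq
  rcases hq with rfl | rfl | rfl | rfl <;>
    simp only [Set.mem_setOf_eq, cyganFun] <;> simp [Complex.sub_im, Complex.one_im,
      Complex.mul_im, Complex.ofReal_re, Complex.ofReal_im, Complex.I_im, Complex.I_re,
      _root_.abs_of_nonneg hs0]
  · nlinarith [hs2, hs2', hs2'']
  · nlinarith [hs2, hs2', hs2'']
  · nlinarith [hs2, hs2', hs2'']
  · have hw : ((√2 : ℝ) : ℂ) / 2 - 2⁻¹ * Complex.I - 1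
        = ((√2/2 - 1 : ℝ) : ℂ) + ((-(1/2) : ℝ) : ℂ) * Complex.I := by
      push_cast; ring
    rw [hw]
    have hn : ‖((√2/2 - 1 : ℝ) : ℂ) + ((-(1/2) : ℝ) : ℂ) * Complex.I‖ ^ 2
        = (√2/2 - 1) ^ 2 + (1/2) ^ 2 := by
      rw [Complex.sq_norm, Complex.normSq_apply]
      simp
      ring
    rw [show (4 : ℕ) = 2 * 2 by norm_num, pow_mul, hn]
    nlinarith

end
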